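/- (E₈ sequence / eleven-dimensional supergravity, E₁₀.) On ℝ^{10} (d = 10, no dilatons) consider the ten wall forms w_i = e_{i+1} − e_i for 1 ≤ i ≤ 9 (symmetry walls) and w_{10} = e₁ + e₂ + e₃ (electric wall of the 3-form). Then (w_i|w_i) = 2 for every i, and the Cartan matrix A_{ij} = 2(w_i|w_j)/(w_i|w_i) is the symmetric matrix with A_{ii} = 2, A_{i,i+1} = A_{i+1,i} = −1 for 1 ≤ i ≤ 8, A_{3,10} = A_{10,3} = −1, and all other entries 0. This is the generalized Cartan matrix of the hyperbolic Kac–Moody algebra E₁₀ = E₈^∧∧ (an A₉ chain with one extra node attached to its third node). -/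

import Mathlib

/-- The wall scalar product on `ℝ^d` (no dilatons):
`(w|w') = Σᵢ wᵢw'ᵢ − (1/(d−1)) (Σᵢ wᵢ)(Σᵢ w'ᵢ)`. -/
noncomputable def wallIP (d : ℕ) (w w' : Fin d → ℝ) : ℝ :=
  (∑ i, w i * w' i) - (1 / ((d : ℝ) - 1)) * (∑ i, w i) * (∑ i, w' i)

set_option maxHeartbeats 2000000 in
/-- (E₈ sequence / eleven-dimensional supergravity, E₁₀.) On `ℝ^{10}` (d = 10, no
dilatons), the ten dominant wall forms (0-based index `m`): symmetry walls
`w_m = e_{m+2} − e_{m+1}` for `m ≤ 8` and the electric wall `w₉ = e₁ + e₂ + e₃` of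
the 3-form, all have squared norm `2`, and their Cartan matrix
`A_{ij} = 2(w_i|w_j)/(w_i|w_i)` is the symmetric generalized Cartan matrix of the
hyperbolic Kac–Moody algebra `E₁₀ = E₈^∧∧`: `A_{ii} = 2`, `A = −1` between consecutive
symmetry walls, `A = −1` between the electric wall and the third symmetry wall
(0-based index `2`), and `0` elsewhere. -/
theorem E10_billiard (w : Fin 10 → Fin 10 → ℝ)
    (hw : ∀ m : Fin 10, w m =
      if m.val < 9 then
        fun l => (if l.val = m.val + 1 then (1 : ℝ) else 0)
          - (if l.val = m.val then 1 else 0)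
      else
        fun l => if l.val < 3 then 1 else 0)
    (A : Fin 10 → Fin 10 → ℝ)
    (hA : ∀ i j, A i j = 2 * wallIP 10 (w i) (w j) / wallIP 10 (w i) (w i)) :
    (∀ m, wallIP 10 (w m) (w m) = 2) ∧
    (∀ i j : Fin 10, A i j =
      if i = j then 2
      else if (i.val + 1 = j.val ∨ j.val + 1 = i.val) ∧ i.val ≤ 8 ∧ j.val ≤ 8 then -1
      else if (i.val = 2 ∧ j.val = 9) ∨ (j.val = 2 ∧ i.val = 9) then -1
      else 0) := by
  have key : ∀ m, wallIP 10 (w m) (w m) = 2 := by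
    intro m
    fin_cases m <;>
      norm_num [hw, wallIP, Fin.sum_univ_succ, -Finset.sum_boole]
  refine ⟨key, fun i j => ?_⟩
  rw [hA, key]
  fin_cases i <;> fin_cases j <;>
    norm_num [hw, wallIP, Fin.sum_univ_succ, -Finset.sum_boole]
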